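/- Let J:ℕ_{≥1}→ℝ_{>0} be nonincreasing, and for n ≥ 1 set D_n(J) = ∑_{x=−(2^n−1)}^{−2^{n−1}} ∑_{y=2^{n−1}}^{2^n−1} J(y−x) and D(J) = inf_{n≥1} D_n(J). Let M > 1 and 1 < a < 2, and let γ be an (M,a)-irreducible contour. Then H_J(γ) ≥ 2·min{J(1), D(J)} · 𝒩'(γ). -/

import Mathlib

noncomputable section
open scoped Classical ENNReal

/-! An integer `k : ℤ` encodes the dual-lattice site (spin flip) `k + 1/2 ∈ ℤ + 1/2`. -/

/-- Auxiliary greedy construction of the canonical cover (with fuel). -/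
def coverAux (n : ℕ) : ℕ → Finset ℤ → Finset ℤ
  | 0, _ => ∅
  | fuel + 1, γ =>
    if h : γ.Nonempty then
      insert (γ.min' h) (coverAux n fuel (γ.filter fun x => γ.min' h + 2 ^ n ≤ x))
    else ∅

/-- The left endpoints of the intervals of the canonical greedy cover `𝒾ₙ(γ)` of `γ` by
open intervals of diameter `2^n` with integer endpoints: `u` encodes `(u, u + 2^n)`. -/
def cover (n : ℕ) (γ : Finset ℤ) : Finset ℤ := coverAux n γ.card γ

/-- The diameter of `γ` (as a subset of `ℤ + 1/2`). -/
def diamZ (γ : Finset ℤ) : ℤ := WithBot.unbotD 0 γ.max - WithTop.untopD 0 γ.min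

/-- `n₀(γ) = ⌊log₂ diam γ⌋`. -/
def n0 (γ : Finset ℤ) : ℕ := Nat.log 2 (diamZ γ).toNat

/-- The isolated intervals `𝒾'ₙ(γ)`. -/
def isoCover (M a : ℝ) (n : ℕ) (γ : Finset ℤ) : Finset ℤ :=
  (cover n γ).filter fun u => ∀ u' ∈ cover n γ, u' ≠ u →
    2 * M * (2 : ℝ) ^ (a * n) ≤ |(u : ℝ) - (u' : ℝ)| - 2 ^ n

/-- The isolated cover size `𝒩'(γ) = |γ| + ∑_{n=1}^{n₀(γ)} |𝒾'ₙ(γ)|`. -/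
def isoCoverSize (M a : ℝ) (γ : Finset ℤ) : ℕ :=
  γ.card + ∑ n ∈ Finset.Icc 1 (n0 γ), (isoCover M a n γ).card

/-- The minus-interior `I₋(γ)`: the integers `x` such that the number of spin flips of
`γ` to the right of `x` is odd. -/
def Iminus (γ : Finset ℤ) : Finset ℤ :=
  (Finset.Icc (WithTop.untopD 0 γ.min) (WithBot.unbotD 0 γ.max)).filter fun x =>
    Odd (γ.filter fun k => x ≤ k).card

/-- The energy `H_J(γ) = 2∑_{x ∈ I₋(γ)} ∑_{y ∉ I₋(γ)} J(|x−y|)`, valued in `ℝ≥0∞`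
(for a general coupling the inner series need not converge). -/
def energyE (J : ℕ → ℝ) (γ : Finset ℤ) : ℝ≥0∞ :=
  2 * ∑ x ∈ Iminus γ, ∑' y : ℤ,
      if y ∈ Iminus γ then 0 else ENNReal.ofReal (J (x - y).natAbs)

/-- `D_n(J) = ∑_{x ∈ I_n^-} ∑_{y ∈ I_n^+} J(y−x)` with `I_n^+ = [2^{n−1}, 2^n−1]` and
`I_n^- = −I_n^+` (meaningful for `n ≥ 1`). -/
def Dn (J : ℕ → ℝ) (n : ℕ) : ℝ :=
  ∑ x ∈ Finset.Icc (-(2 ^ n - 1) : ℤ) (-(2 ^ (n - 1)) : ℤ),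
    ∑ y ∈ Finset.Icc ((2 : ℤ) ^ (n - 1)) ((2 : ℤ) ^ n - 1), J (y - x).natAbs

/-- `D(J) = inf_{n ≥ 1} D_n(J)`. -/
def DJ (J : ℕ → ℝ) : ℝ := ⨅ n : ℕ, Dn J (n + 1)

/-- `γ` is an `(M,a)`-irreducible contour. -/
def IsContour (M a : ℝ) (γ : Finset ℤ) : Prop :=
  γ.Nonempty ∧ Even γ.card ∧
    ¬∃ P : Finset (Finset ℤ), 2 ≤ P.card ∧ (∀ g ∈ P, g.Nonempty ∧ Even g.card) ∧
      (P : Set (Finset ℤ)).PairwiseDisjoint id ∧ P.sup id = γ ∧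
      ∀ g ∈ P, ∀ g' ∈ P, g ≠ g' → ∀ x ∈ g, ∀ y ∈ g',
        M * ((min (diamZ g) (diamZ g') : ℤ) : ℝ) ^ a < |(x : ℝ) - (y : ℝ)|

-- ===== auxiliary development =====

def par (γ : Finset ℤ) (x : ℤ) : Prop := Odd ((γ.filter fun k => x ≤ k).card)

lemma mem_Iminus_iff {γ : Finset ℤ} (hne : γ.Nonempty) (hev : Even γ.card) {x : ℤ} :
    x ∈ Iminus γ ↔ par γ x := by
  have hmin : WithTop.untopD 0 γ.min = γ.min' hne := by rw [← Finset.coe_min' hne]; rfl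
  have hmax : WithBot.unbotD 0 γ.max = γ.max' hne := by rw [← Finset.coe_max' hne]; rfl
  unfold Iminus par
  rw [Finset.mem_filter, Finset.mem_Icc, hmin, hmax]
  constructor
  · exact fun h => h.2
  · intro h
    refine ⟨⟨?_, ?_⟩, h⟩
    · by_contra hx
      push_neg at hx
      have hfe : γ.filter (fun k => x ≤ k) = γ := by
        apply Finset.filter_true_of_mem
        intro k hk
        exact le_trans hx.le (Finset.min'_le γ k hk)
      rw [hfe] at h
      exact (Nat.not_odd_iff_even.mpr hev) h
    · have hne2 : (γ.filter (fun k => x ≤ k)).Nonempty := by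
        rw [← Finset.card_pos]
        exact h.pos
      obtain ⟨k, hk⟩ := hne2
      rw [Finset.mem_filter] at hk
      exact le_trans hk.2 (Finset.le_max' γ k hk.1)

lemma filter_ge_eq_of_gap {γ : Finset ℤ} {x u : ℤ} (hxu : x ≤ u)
    (hgap : ∀ k ∈ γ, ¬(x ≤ k ∧ k < u)) :
    γ.filter (fun k => x ≤ k) = γ.filter (fun k => u ≤ k) := by
  ext k
  simp only [Finset.mem_filter]
  constructor
  · rintro ⟨hk, hxk⟩
    refine ⟨hk, ?_⟩
    by_contra hku
    exact hgap k hk ⟨hxk, lt_of_not_ge hku⟩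
  · rintro ⟨hk, huk⟩
    exact ⟨hk, le_trans hxu huk⟩

lemma par_pair {γ : Finset ℤ} {k : ℤ} (hk : k ∈ γ) :
    (par γ k ↔ ¬ par γ (k + 1)) := by
  have hins : γ.filter (fun m => k ≤ m) = insert k (γ.filter (fun m => k + 1 ≤ m)) := by
    ext m
    simp only [Finset.mem_filter, Finset.mem_insert]
    constructor
    · rintro ⟨hm, hkm⟩
      rcases eq_or_lt_of_le hkm with h | h
      · exact Or.inl h.symm
      · exact Or.inr ⟨hm, h⟩
    · rintro (rfl | ⟨hm, hm2⟩)
      · exact ⟨hk, le_refl _⟩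
      · exact ⟨hm, by omega⟩
  have hnotmem : k ∉ γ.filter (fun m => k + 1 ≤ m) := by
    simp only [Finset.mem_filter]; omega
  unfold par
  rw [hins, Finset.card_insert_of_notMem hnotmem]
  rw [Nat.odd_add_one]

lemma coverAux_subset (n : ℕ) : ∀ (fuel : ℕ) (γ : Finset ℤ), coverAux n fuel γ ⊆ γ := by
  intro fuel
  induction fuel with
  | zero => intro γ; simp [coverAux]
  | succ m ih =>
    intro γ
    rw [coverAux]
    split_ifs with h
    · intro u hu
      rcases Finset.mem_insert.mp hu with rfl | hu
      · exact γ.min'_mem h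
      · exact Finset.filter_subset _ _ (ih _ hu)
    · simp

lemma coverAux_covers (n : ℕ) : ∀ (fuel : ℕ) (γ : Finset ℤ), γ.card ≤ fuel →
    ∀ k ∈ γ, ∃ u ∈ coverAux n fuel γ, u ≤ k ∧ k < u + 2 ^ n := by
  intro fuel
  induction fuel with
  | zero =>
    intro γ hcard k hk
    rw [Nat.le_zero, Finset.card_eq_zero] at hcard
    simp [hcard] at hk
  | succ m ih =>
    intro γ hcard k hk
    have h : γ.Nonempty := ⟨k, hk⟩
    rw [coverAux, dif_pos h]
    set u0 := γ.min' h with hu0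
    by_cases hcase : k < u0 + 2 ^ n
    · exact ⟨u0, Finset.mem_insert_self _ _, γ.min'_le k hk, hcase⟩
    · set γ' := γ.filter fun x => u0 + 2 ^ n ≤ x with hγ'
      have hkk : k ∈ γ' := by
        rw [hγ', Finset.mem_filter]
        exact ⟨hk, le_of_not_gt hcase⟩
      have hcard' : γ'.card ≤ m := by
        have hsub : γ' ⊆ γ.erase u0 := by
          intro x hx
          rw [Finset.mem_erase]
          rw [hγ', Finset.mem_filter] at hx
          constructor
          · have : (0:ℤ) < 2 ^ n := by positivity
            omega
          · exact hx.1
        have := Finset.card_le_card hsub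
        rw [Finset.card_erase_of_mem (γ.min'_mem h)] at this
        omega
      obtain ⟨u, hu, h1, h2⟩ := ih γ' hcard' k hkk
      exact ⟨u, Finset.mem_insert_of_mem hu, h1, h2⟩

lemma cover_subset (n : ℕ) (γ : Finset ℤ) : cover n γ ⊆ γ := coverAux_subset n _ γ

lemma cover_covers (n : ℕ) (γ : Finset ℤ) :
    ∀ k ∈ γ, ∃ u ∈ cover n γ, u ≤ k ∧ k < u + 2 ^ n :=
  coverAux_covers n γ.card γ le_rfl

lemma isoCover_subset (M a : ℝ) (n : ℕ) (γ : Finset ℤ) : isoCover M a n γ ⊆ cover n γ :=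
  Finset.filter_subset _ _

lemma isoCover_isolated {M a : ℝ} {n : ℕ} {γ : Finset ℤ} {u : ℤ}
    (hu : u ∈ isoCover M a n γ) {u' : ℤ} (hu' : u' ∈ cover n γ) (hne : u' ≠ u) :
    2 * M * (2 : ℝ) ^ (a * n) ≤ |(u : ℝ) - (u' : ℝ)| - 2 ^ n := by
  rw [isoCover, Finset.mem_filter] at hu
  exact hu.2 u' hu' hne

lemma rpow_ge {a : ℝ} (ha : 1 ≤ a) (n : ℕ) : ((2 : ℝ) ^ n : ℝ) ≤ (2 : ℝ) ^ (a * n) := by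
  rw [← Real.rpow_natCast 2 n]
  apply Real.rpow_le_rpow_of_exponent_le one_le_two
  nlinarith [Nat.cast_nonneg (α := ℝ) n]

lemma iso_dist_int {M a : ℝ} (hM : 1 < M) (ha : 1 < a) {n : ℕ} {γ : Finset ℤ} {u u' : ℤ}
    (hu : u ∈ isoCover M a n γ) (hu' : u' ∈ cover n γ) (hne : u' ≠ u) :
    3 * 2 ^ n ≤ |u - u'| := by
  have hiso := isoCover_isolated hu hu' hne
  have h1 : (2 : ℝ) ^ n ≤ (2 : ℝ) ^ (a * n) := rpow_ge ha.le n
  have h2 : (3 : ℝ) * 2 ^ n ≤ |(u : ℝ) - (u' : ℝ)| := by nlinarith [abs_nonneg ((u:ℝ) - u')]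
  have h3 : ((3 * 2 ^ n : ℤ) : ℝ) ≤ |((u - u' : ℤ) : ℝ)| := by push_cast; exact h2
  rw [← Int.cast_abs] at h3
  exact_mod_cast h3

lemma far_flip {M a : ℝ} (hM : 1 < M) (ha : 1 < a) {n : ℕ} {γ : Finset ℤ} {u k : ℤ}
    (hu : u ∈ isoCover M a n γ) (hk : k ∈ γ) (hout : k < u ∨ u + 2 ^ n ≤ k) :
    2 ^ (n + 1) + 1 ≤ |u - k| := by
  obtain ⟨u', hu', h1, h2⟩ := cover_covers n γ k hk
  have hne : u' ≠ u := by
    rintro rfl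
    omega
  have hd := iso_dist_int hM ha hu hu' hne
  have hp : (2 : ℤ) ^ (n + 1) = 2 * 2 ^ n := by ring
  rcases le_abs.mp hd with h | h <;> rw [le_abs] <;> omega

lemma far_flip_real {M a : ℝ} {n : ℕ} {γ : Finset ℤ} {u k : ℤ}
    (hu : u ∈ isoCover M a n γ) (hk : k ∈ γ) (hout : k < u ∨ u + 2 ^ n ≤ k) :
    2 * M * (2 : ℝ) ^ (a * n) + 1 ≤ |(u : ℝ) - (k : ℝ)| := by
  obtain ⟨u', hu', h1, h2⟩ := cover_covers n γ k hk
  have hne : u' ≠ u := by rintro rfl; omega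
  have hiso := isoCover_isolated hu hu' hne
  have htri : |(u : ℝ) - u'| ≤ |(u : ℝ) - k| + |(k : ℝ) - u'| := abs_sub_le _ _ _
  have hk' : |(k : ℝ) - u'| ≤ 2 ^ n - 1 := by
    have e1 : (u':ℝ) ≤ (k:ℝ) := by exact_mod_cast h1
    have e2 : (k:ℝ) ≤ (u':ℝ) + 2^n - 1 := by
      have h3 : k ≤ u' + 2^n - 1 := by omega
      have h4 : (k:ℝ) ≤ ((u' + 2^n - 1 : ℤ) : ℝ) := by exact_mod_cast h3
      push_cast at h4
      linarith
    rw [abs_sub_le_iff]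
    constructor <;> linarith
  linarith

lemma diamZ_nonneg {γ : Finset ℤ} (h : γ.Nonempty) : 0 ≤ diamZ γ := by
  have hmin : WithTop.untopD 0 γ.min = γ.min' h := by rw [← Finset.coe_min' h]; rfl
  have hmax : WithBot.unbotD 0 γ.max = γ.max' h := by rw [← Finset.coe_max' h]; rfl
  rw [diamZ, hmin, hmax]
  have := Finset.min'_le γ _ (γ.max'_mem h)
  omega

lemma odd_card_in_interval {M a : ℝ} (hM : 1 < M) (ha1 : 1 < a)
    {γ : Finset ℤ} (hγ : IsContour M a γ) {n : ℕ} (hn1 : 1 ≤ n) (hn0 : n ≤ n0 γ)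
    {u : ℤ} (hu : u ∈ isoCover M a n γ) :
    Odd ((γ.filter fun k => u ≤ k ∧ k < u + 2 ^ n).card) := by
  obtain ⟨hne, hev, hirr⟩ := hγ
  set gI := γ.filter fun k => u ≤ k ∧ k < u + 2 ^ n with hgI
  have hpow : (0:ℤ) < 2 ^ n := by positivity
  have huγ : u ∈ γ := cover_subset n γ (isoCover_subset M a n γ hu)
  have hugI : u ∈ gI := by
    rw [hgI, Finset.mem_filter]
    exact ⟨huγ, le_refl u, by omega⟩
  have hdγ : (2:ℤ)^n ≤ diamZ γ := by
    have h0 : 0 ≤ diamZ γ := diamZ_nonneg hne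
    have hd0 : (diamZ γ).toNat ≠ 0 := by
      intro h
      rw [n0, h, Nat.log_zero_right] at hn0; omega
    have h1 : 2 ^ (n0 γ) ≤ (diamZ γ).toNat := Nat.pow_log_le_self 2 hd0
    have h2 : (2:ℕ)^n ≤ 2 ^ (n0 γ) := Nat.pow_le_pow_right (by norm_num) hn0
    have h3 : ((2:ℕ)^n : ℤ) ≤ ((diamZ γ).toNat : ℤ) := by exact_mod_cast le_trans h2 h1
    rw [Int.toNat_of_nonneg h0] at h3
    exact_mod_cast h3
  have hgIne : gI.Nonempty := ⟨u, hugI⟩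
  have hdgI : diamZ gI ≤ 2^n - 1 := by
    have hmin : WithTop.untopD 0 gI.min = gI.min' hgIne := by rw [← Finset.coe_min' hgIne]; rfl
    have hmax : WithBot.unbotD 0 gI.max = gI.max' hgIne := by rw [← Finset.coe_max' hgIne]; rfl
    rw [diamZ, hmin, hmax]
    have h1 := (Finset.mem_filter.mp (gI.min'_mem hgIne)).2.1
    have h2 := (Finset.mem_filter.mp (gI.max'_mem hgIne)).2.2
    omega
  have hgIneq : gI ≠ γ := by
    intro h
    rw [h] at hdgI
    omega
  by_contra hodd
  rw [Nat.not_odd_iff_even] at hodd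
  set gC := γ \ gI with hgC
  have hsub : gI ⊆ γ := Finset.filter_subset _ _
  have hgCne : gC.Nonempty := by
    rw [hgC, Finset.sdiff_nonempty]
    intro hss
    exact hgIneq (Finset.Subset.antisymm hsub hss)
  have hgCev : Even gC.card := by
    rw [hgC, Finset.card_sdiff_of_subset hsub, Nat.even_sub (Finset.card_le_card hsub)]
    tauto
  have hugC : u ∉ gC := by rw [hgC, Finset.mem_sdiff]; tauto
  have hMpos : (0:ℝ) < M := by linarith
  have hkey : ∀ x ∈ gI, ∀ y ∈ gC,
      M * ((min (diamZ gI) (diamZ gC) : ℤ) : ℝ) ^ a < |(x:ℝ) - (y:ℝ)| := by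
    intro x hx y hy
    rw [hgC, Finset.mem_sdiff] at hy
    have hyout : y < u ∨ u + 2^n ≤ y := by
      have h2 := hy.2
      rw [hgI, Finset.mem_filter] at h2
      by_contra hc
      push_neg at hc
      exact h2 ⟨hy.1, hc.1, by omega⟩
    have hfar := far_flip_real hu hy.1 hyout
    rw [hgI, Finset.mem_filter] at hx
    have h2n : ((2:ℝ))^n ≤ (2:ℝ)^(a*n) := rpow_ge ha1.le n
    have hmin0 : (0:ℝ) ≤ ((min (diamZ gI) (diamZ gC) : ℤ):ℝ) := by
      have := diamZ_nonneg hgIne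
      have := diamZ_nonneg hgCne
      have : (0:ℤ) ≤ min (diamZ gI) (diamZ gC) := by omega
      exact_mod_cast this
    have hminle : ((min (diamZ gI) (diamZ gC) : ℤ):ℝ) ≤ (2:ℝ)^n := by
      have h1 : min (diamZ gI) (diamZ gC) ≤ 2^n := le_trans (min_le_left _ _) (by omega)
      calc ((min (diamZ gI) (diamZ gC) : ℤ):ℝ) ≤ (((2:ℤ)^n : ℤ):ℝ) := by exact_mod_cast h1
        _ = (2:ℝ)^n := by push_cast; ring
    have hrp : ((min (diamZ gI) (diamZ gC) : ℤ):ℝ)^a ≤ (2:ℝ)^(a*n) := by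
      calc ((min (diamZ gI) (diamZ gC) : ℤ):ℝ)^a ≤ ((2:ℝ)^n)^a :=
            Real.rpow_le_rpow hmin0 hminle (by linarith)
        _ = (2:ℝ)^(a*n) := by
            rw [← Real.rpow_natCast 2 n, ← Real.rpow_mul (by norm_num), mul_comm]
    have hxb : |(x:ℝ) - u| ≤ 2^n - 1 := by
      rw [abs_sub_le_iff]
      have hx1 : (u:ℝ) ≤ (x:ℝ) := by exact_mod_cast hx.2.1
      have hx2 : (x:ℝ) ≤ (u:ℝ) + 2^n - 1 := by
        have : x ≤ u + 2^n - 1 := by omega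
        have h5 : (x:ℝ) ≤ ((u + 2^n - 1 : ℤ):ℝ) := by exact_mod_cast this
        push_cast at h5
        linarith
      constructor <;> linarith
    have htri : |(u:ℝ) - y| ≤ |(u:ℝ) - x| + |(x:ℝ) - y| := abs_sub_le _ _ _
    rw [abs_sub_comm (u:ℝ) (x:ℝ)] at htri
    have hM2 : (0:ℝ) < M * (2:ℝ)^(a*n) := by positivity
    have : M * (2:ℝ)^(a*n) < |(x:ℝ) - y| := by nlinarith
    calc M * ((min (diamZ gI) (diamZ gC) : ℤ):ℝ)^a ≤ M * (2:ℝ)^(a*n) := by nlinarith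
      _ < _ := this
  apply hirr
  have hIC : gI ≠ gC := by
    intro h
    rw [h] at hugI
    exact hugC hugI
  refine ⟨{gI, gC}, ?_, ?_, ?_, ?_, ?_⟩
  · rw [Finset.card_insert_of_notMem (by simpa using hIC), Finset.card_singleton]
  · intro g hg
    rcases Finset.mem_insert.mp hg with rfl | hg
    · exact ⟨hgIne, hodd⟩
    · rw [Finset.mem_singleton] at hg
      subst hg
      exact ⟨hgCne, hgCev⟩
  · rw [Finset.coe_insert, Finset.coe_singleton]
    intro g hg g' hg' hne'
    rcases hg with rfl | hg <;> rcases hg' with rfl | hg'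
    · exact absurd rfl hne'
    · rw [Set.mem_singleton_iff] at hg'; subst hg'
      exact (Finset.sdiff_disjoint (s := gI) (t := γ)).symm
    · rw [Set.mem_singleton_iff] at hg; subst hg
      exact (Finset.sdiff_disjoint (s := gI) (t := γ))
    · rw [Set.mem_singleton_iff] at hg hg'; subst hg; subst hg'
      exact absurd rfl hne'
  · rw [Finset.sup_insert, Finset.sup_singleton]
    simpa [hgC] using Finset.union_sdiff_of_subset hsub
  · intro g hg g' hg' hgg' x hx y hy
    have hmem : ∀ h, h ∈ ({gI, gC} : Finset (Finset ℤ)) → h = gI ∨ h = gC := by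
      intro h hh
      rcases Finset.mem_insert.mp hh with rfl | hh
      · exact Or.inl rfl
      · exact Or.inr (Finset.mem_singleton.mp hh)
    rcases hmem g hg with rfl | rfl <;> rcases hmem g' hg' with rfl | rfl
    · exact absurd rfl hgg'
    · exact hkey x hx y hy
    · rw [min_comm, abs_sub_comm]
      exact hkey y hy x hx
    · exact absurd rfl hgg'

def Lset (n : ℕ) (u : ℤ) : Finset ℤ := Finset.Icc (u - 2^(n-1) + 1) u
def Rset (n : ℕ) (u : ℤ) : Finset ℤ := Finset.Icc (u + 2^n) (u + 2^n + 2^(n-1) - 1)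
def Sset (γ : Finset ℤ) (n : ℕ) (u : ℤ) : Finset (ℤ × ℤ) :=
  if par γ u then (Lset n u) ×ˢ (Rset n u) else (Rset n u) ×ˢ (Lset n u)

lemma pow_split {n : ℕ} (hn : 1 ≤ n) : (2:ℤ)^n = 2 * 2^(n-1) := by
  conv_lhs => rw [show n = (n-1) + 1 by omega]
  rw [pow_succ]
  ring

lemma no_flip {M a : ℝ} (hM : 1 < M) (ha : 1 < a) {n : ℕ} (hn : 1 ≤ n) {γ : Finset ℤ}
    {u : ℤ} (hu : u ∈ isoCover M a n γ) {k : ℤ} (hk : k ∈ γ) :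
    ¬(u - 2^(n-1) + 1 ≤ k ∧ k ≤ u - 1) ∧ ¬(u + 2^n ≤ k ∧ k ≤ u + 2^n + 2^(n-1) - 2) := by
  have hps := pow_split hn
  have hp1 : (2:ℤ)^(n+1) = 2 * 2^n := by ring
  have hQ : (0:ℤ) < 2^(n-1) := by positivity
  constructor
  · rintro ⟨h1, h2⟩
    have := far_flip hM ha hu hk (Or.inl (by omega))
    rcases le_abs.mp this with h | h <;> omega
  · rintro ⟨h1, h2⟩
    have := far_flip hM ha hu hk (Or.inr (by omega))
    rcases le_abs.mp this with h | h <;> omega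

lemma par_L {M a : ℝ} (hM : 1 < M) (ha : 1 < a) {n : ℕ} (hn : 1 ≤ n) {γ : Finset ℤ}
    {u : ℤ} (hu : u ∈ isoCover M a n γ) {x : ℤ} (hx : x ∈ Lset n u) :
    (par γ x ↔ par γ u) := by
  rw [Lset, Finset.mem_Icc] at hx
  unfold par
  rw [filter_ge_eq_of_gap hx.2 ?_]
  rintro k hk ⟨h1, h2⟩
  exact ((no_flip hM ha hn hu hk).1) ⟨by omega, by omega⟩

lemma par_R {M a : ℝ} (hM : 1 < M) (ha : 1 < a) {n : ℕ} (hn : 1 ≤ n) {γ : Finset ℤ}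
    {u : ℤ} (hu : u ∈ isoCover M a n γ) {y : ℤ} (hy : y ∈ Rset n u) :
    (par γ y ↔ par γ (u + 2^n)) := by
  rw [Rset, Finset.mem_Icc] at hy
  unfold par
  rw [filter_ge_eq_of_gap hy.1 ?_]
  rintro k hk ⟨h1, h2⟩
  exact ((no_flip hM ha hn hu hk).2) ⟨by omega, by omega⟩

lemma par_across {γ : Finset ℤ} {u : ℤ} {n : ℕ}
    (hodd : Odd ((γ.filter fun k => u ≤ k ∧ k < u + 2 ^ n).card)) :
    (par γ (u + 2^n) ↔ ¬ par γ u) := by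
  have hsplit : γ.filter (fun k => u ≤ k) =
      (γ.filter fun k => u + 2^n ≤ k) ∪ (γ.filter fun k => u ≤ k ∧ k < u + 2^n) := by
    ext k
    simp only [Finset.mem_filter, Finset.mem_union]
    constructor
    · rintro ⟨hk, h⟩
      by_cases h2 : k < u + 2^n
      · exact Or.inr ⟨hk, h, h2⟩
      · exact Or.inl ⟨hk, by omega⟩
    · rintro (⟨hk, h⟩ | ⟨hk, h⟩)
      · have hpow : (0:ℤ) < 2^n := by positivity
        exact ⟨hk, by omega⟩
      · exact ⟨hk, h.1⟩
  have hdisj : Disjoint (γ.filter fun k => u + 2^n ≤ k)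
      (γ.filter fun k => u ≤ k ∧ k < u + 2^n) := by
    rw [Finset.disjoint_left]
    intro k h1 h2
    simp only [Finset.mem_filter] at h1 h2
    omega
  unfold par
  rw [hsplit, Finset.card_union_of_disjoint hdisj]
  rcases hodd with ⟨m, hm⟩
  rw [hm, Nat.odd_iff, Nat.odd_iff]
  omega

lemma Sset_mem {M a : ℝ} (hM : 1 < M) (ha1 : 1 < a) {γ : Finset ℤ} (hγ : IsContour M a γ)
    {n : ℕ} (hn1 : 1 ≤ n) (hn0 : n ≤ n0 γ) {u : ℤ} (hu : u ∈ isoCover M a n γ)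
    {p : ℤ × ℤ} (hp : p ∈ Sset γ n u) : p.1 ∈ Iminus γ ∧ p.2 ∉ Iminus γ := by
  have hodd := odd_card_in_interval hM ha1 hγ hn1 hn0 hu
  have hacross := par_across hodd
  rw [Sset] at hp
  rw [mem_Iminus_iff hγ.1 hγ.2.1, mem_Iminus_iff hγ.1 hγ.2.1]
  split_ifs at hp with hpar
  · rw [Finset.mem_product] at hp
    rw [par_L hM ha1 hn1 hu hp.1, par_R hM ha1 hn1 hu hp.2, hacross]
    exact ⟨hpar, fun h => h hpar⟩
  · rw [Finset.mem_product] at hp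
    rw [par_R hM ha1 hn1 hu hp.1, par_L hM ha1 hn1 hu hp.2, hacross]
    exact ⟨hpar, hpar⟩

lemma Sset_bounds {γ : Finset ℤ} {n : ℕ} (hn : 1 ≤ n) {u : ℤ} {p : ℤ × ℤ}
    (hp : p ∈ Sset γ n u) :
    (u - 2^(n-1) + 1 ≤ p.1 ∧ p.1 ≤ u + 2^n + 2^(n-1) - 1) ∧
    (u - 2^(n-1) + 1 ≤ p.2 ∧ p.2 ≤ u + 2^n + 2^(n-1) - 1) ∧
    2^n ≤ |p.1 - p.2| ∧ |p.1 - p.2| ≤ 2^(n+1) - 2 := by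
  have hps := pow_split hn
  have hp1 : (2:ℤ)^(n+1) = 2 * 2^n := by ring
  have hQ : (0:ℤ) < 2^(n-1) := by positivity
  rw [Sset] at hp
  split_ifs at hp <;> rw [Finset.mem_product, Lset, Rset, Finset.mem_Icc, Finset.mem_Icc] at hp <;>
      obtain ⟨⟨a1, a2⟩, b1, b2⟩ := hp
  · rw [abs_of_nonpos (by omega)]
    refine ⟨⟨by omega, by omega⟩, ⟨by omega, by omega⟩, by omega, by omega⟩
  · rw [abs_of_nonneg (by omega)]
    refine ⟨⟨by omega, by omega⟩, ⟨by omega, by omega⟩, by omega, by omega⟩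

def prp (γ : Finset ℤ) (k : ℤ) : ℤ × ℤ := if par γ k then (k, k+1) else (k+1, k)

lemma prp_mem {γ : Finset ℤ} (hne : γ.Nonempty) (hev : Even γ.card) {k : ℤ} (hk : k ∈ γ) :
    (prp γ k).1 ∈ Iminus γ ∧ (prp γ k).2 ∉ Iminus γ := by
  have hpp := par_pair hk
  rw [mem_Iminus_iff hne hev, mem_Iminus_iff hne hev, prp]
  split_ifs with h
  · exact ⟨h, by simpa using hpp.mp h⟩
  · exact ⟨by tauto, h⟩

lemma prp_sum (γ : Finset ℤ) (k : ℤ) : (prp γ k).1 + (prp γ k).2 = 2*k+1 := by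
  rw [prp]; split_ifs <;> simp <;> ring

lemma prp_natAbs (γ : Finset ℤ) (k : ℤ) : ((prp γ k).1 - (prp γ k).2).natAbs = 1 := by
  rw [prp]; split_ifs <;> simp

lemma sum_prod_swap (s t : Finset ℤ) (f : ℤ → ℤ → ℝ≥0∞) :
    ∑ p ∈ s ×ˢ t, f p.1 p.2 = ∑ p ∈ t ×ˢ s, f p.2 p.1 := by
  rw [Finset.sum_product, Finset.sum_product]
  exact Finset.sum_comm

lemma sum_Sset (J : ℕ → ℝ) (hJ0 : ∀ m : ℕ, 1 ≤ m → 0 ≤ J m) {n : ℕ} (hn : 1 ≤ n)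
    (γ : Finset ℤ) (u : ℤ) :
    ENNReal.ofReal (Dn J n) ≤ ∑ p ∈ Sset γ n u, ENNReal.ofReal (J ((p.1 - p.2).natAbs)) := by
  have hps := pow_split hn
  have hQ : (1:ℤ) ≤ 2^(n-1) := by
    have := pow_pos (by norm_num : (0:ℤ) < 2) (n-1)
    omega
  have hterm : ∀ x ∈ Finset.Icc (-(2 ^ n - 1) : ℤ) (-(2 ^ (n - 1)) : ℤ),
      ∀ y ∈ Finset.Icc ((2:ℤ) ^ (n - 1)) ((2:ℤ) ^ n - 1), 0 ≤ J ((y - x).natAbs) := by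
    intro x hx y hy
    rw [Finset.mem_Icc] at hx hy
    apply hJ0
    omega
  have key : ∑ p ∈ (Lset n u) ×ˢ (Rset n u), ENNReal.ofReal (J ((p.1 - p.2).natAbs))
      = ENNReal.ofReal (Dn J n) := by
    rw [Finset.sum_product, Dn, ENNReal.ofReal_sum_of_nonneg
      (fun x hx => Finset.sum_nonneg fun y hy => hterm x hx y hy)]
    have hL : Lset n u = (Finset.Icc (-(2 ^ n - 1) : ℤ) (-(2 ^ (n - 1)) : ℤ)).map
        (addRightEmbedding (u + 2^(n-1))) := by
      rw [Finset.map_add_right_Icc, Lset]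
      congr 1 <;> omega
    have hR : Rset n u = (Finset.Icc ((2:ℤ) ^ (n - 1)) ((2:ℤ) ^ n - 1)).map
        (addRightEmbedding (u + 2^(n-1))) := by
      rw [Finset.map_add_right_Icc, Rset]
      congr 1 <;> omega
    rw [hL, hR, Finset.sum_map]
    apply Finset.sum_congr rfl
    intro x hx
    rw [Finset.sum_map, ENNReal.ofReal_sum_of_nonneg (fun y hy => hterm x hx y hy)]
    apply Finset.sum_congr rfl
    intro y hy
    congr 2
    simp only [addRightEmbedding, Function.Embedding.coeFn_mk]
    have : (x + (u + 2^(n-1)) - (y + (u + 2^(n-1)))) = -(y - x) := by ring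
    rw [this, Int.natAbs_neg]
  rw [Sset]
  split_ifs
  · rw [key]
  · rw [sum_prod_swap (Lset n u) (Rset n u)
      (fun x y => ENNReal.ofReal (J ((x - y).natAbs)))] at key
    rw [← key]
    apply le_of_eq
    apply Finset.sum_congr rfl
    intro p _
    congr 1
    rw [← Int.natAbs_neg]
    congr 1
    ring

set_option maxHeartbeats 1000000 in
lemma sum_le_double (J : ℕ → ℝ) (γ : Finset ℤ) (T : Finset (ℤ × ℤ))
    (hT : ∀ p ∈ T, p.1 ∈ Iminus γ ∧ p.2 ∉ Iminus γ) :
    ∑ p ∈ T, ENNReal.ofReal (J ((p.1 - p.2).natAbs)) ≤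
    ∑ x ∈ Iminus γ, ∑' y : ℤ,
      if y ∈ Iminus γ then 0 else ENNReal.ofReal (J ((x - y).natAbs)) := by
  rw [← Finset.sum_fiberwise_of_maps_to (g := Prod.fst) (t := Iminus γ)
    (fun p hp => (hT p hp).1)]
  apply Finset.sum_le_sum
  intro x hx
  have hinj : ∀ p ∈ T.filter (fun p => p.1 = x), ∀ q ∈ T.filter (fun p => p.1 = x),
      p.2 = q.2 → p = q := by
    intro p hp q hq hpq
    rw [Finset.mem_filter] at hp hq
    exact Prod.ext (hp.2.trans hq.2.symm) hpq
  calc ∑ p ∈ T.filter (fun p => p.1 = x), ENNReal.ofReal (J ((p.1 - p.2).natAbs))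
      = ∑ p ∈ T.filter (fun p => p.1 = x),
          (if p.2 ∈ Iminus γ then 0 else ENNReal.ofReal (J ((x - p.2).natAbs))) := by
        apply Finset.sum_congr rfl
        intro p hp
        rw [Finset.mem_filter] at hp
        rw [if_neg (hT p hp.1).2, hp.2]
    _ = ∑ y ∈ (T.filter (fun p => p.1 = x)).image Prod.snd,
          (if y ∈ Iminus γ then 0 else ENNReal.ofReal (J ((x - y).natAbs))) :=
        (Finset.sum_image (f := fun y => if y ∈ Iminus γ then 0
          else ENNReal.ofReal (J ((x - y).natAbs))) hinj).symm
    _ ≤ _ := ENNReal.sum_le_tsum _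

lemma Sset_scale_not {γ : Finset ℤ} {n n' : ℕ} (h1 : 1 ≤ n) (h1' : 1 ≤ n') (hlt : n < n')
    {u u' : ℤ} {p : ℤ × ℤ} (hp : p ∈ Sset γ n u) (hp' : p ∈ Sset γ n' u') : False := by
  have b1 := (Sset_bounds h1 hp).2.2
  have b2 := (Sset_bounds h1' hp').2.2
  have hle : (2:ℤ)^(n+1) ≤ 2^(n') := pow_le_pow_right₀ (by norm_num) (by omega)
  omega

lemma Sset_u_disjoint {M a : ℝ} (hM : 1 < M) (ha : 1 < a) {γ : Finset ℤ} {n : ℕ} (hn : 1 ≤ n)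
    {u u' : ℤ} (hu : u ∈ isoCover M a n γ) (hu' : u' ∈ isoCover M a n γ) (hne : u ≠ u') :
    Disjoint (Sset γ n u) (Sset γ n u') := by
  rw [Finset.disjoint_left]
  intro p hp hp'
  have b1 := (Sset_bounds hn hp).1
  have b2 := (Sset_bounds hn hp').1
  have hd := iso_dist_int hM ha hu (isoCover_subset _ _ _ _ hu') (Ne.symm hne)
  have hps := pow_split hn
  have hQ : (0:ℤ) < 2^(n-1) := by positivity
  rcases le_abs.mp hd with h | h <;> omega


/-- for a nonincreasing positive coupling `J`, the energy of an
`(M,a)`-irreducible contour dominates the isolated cover size: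
`H_J(γ) ≥ 2·min{J(1), D(J)}·𝒩'(γ)`. -/
theorem energy_ge_isoCoverSize (J : ℕ → ℝ) (hpos : ∀ n : ℕ, 1 ≤ n → 0 < J n)
    (hmono : ∀ m n : ℕ, 1 ≤ m → m ≤ n → J n ≤ J m)
    (M a : ℝ) (hM : 1 < M) (ha1 : 1 < a) (ha2 : a < 2)
    (γ : Finset ℤ) (hγ : IsContour M a γ) :
    ENNReal.ofReal (2 * min (J 1) (DJ J)) * (isoCoverSize M a γ : ℝ≥0∞)
      ≤ energyE J γ := by
  classical
  have hne := hγ.1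
  have hev := hγ.2.1
  have hJ0 : ∀ k : ℕ, 1 ≤ k → 0 ≤ J k := fun k hk => (hpos k hk).le
  have hDn_nonneg : ∀ k : ℕ, 0 ≤ Dn J (k+1) := by
    intro k
    apply Finset.sum_nonneg
    intro x hx
    apply Finset.sum_nonneg
    intro y hy
    rw [Finset.mem_Icc] at hx hy
    have hQ : (1:ℤ) ≤ 2^(k+1-1) := by
      have := pow_pos (by norm_num : (0:ℤ) < 2) (k+1-1)
      omega
    apply hJ0
    omega
  have hbdd : BddBelow (Set.range fun k : ℕ => Dn J (k+1)) :=
    ⟨0, by rintro r ⟨k, rfl⟩; exact hDn_nonneg k⟩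
  have hDJ0 : 0 ≤ DJ J := le_ciInf hDn_nonneg
  have hDJle : ∀ n : ℕ, 1 ≤ n →
      ENNReal.ofReal (min (J 1) (DJ J)) ≤ ENNReal.ofReal (Dn J n) := by
    intro n hn
    apply ENNReal.ofReal_le_ofReal
    refine le_trans (min_le_right _ _) ?_
    have h := ciInf_le hbdd (n-1)
    rwa [show n - 1 + 1 = n by omega] at h
  set c := ENNReal.ofReal (min (J 1) (DJ J)) with hc
  set T1 : Finset (ℤ × ℤ) := γ.image (prp γ) with hT1
  set B : Finset (ℤ × ℤ) := (Finset.Icc 1 (n0 γ)).biUnion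
      (fun n => (isoCover M a n γ).biUnion (fun u => Sset γ n u)) with hB
  have hmemT1 : ∀ p ∈ T1, p.1 ∈ Iminus γ ∧ p.2 ∉ Iminus γ := by
    intro p hp
    rw [hT1, Finset.mem_image] at hp
    obtain ⟨k, hk, rfl⟩ := hp
    exact prp_mem hne hev hk
  have hmemB : ∀ p ∈ B, p.1 ∈ Iminus γ ∧ p.2 ∉ Iminus γ := by
    intro p hp
    rw [hB, Finset.mem_biUnion] at hp
    obtain ⟨n, hn, hp⟩ := hp
    rw [Finset.mem_biUnion] at hp
    obtain ⟨u, hu, hp⟩ := hp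
    rw [Finset.mem_Icc] at hn
    exact Sset_mem hM ha1 hγ hn.1 hn.2 hu hp
  have hdisj : Disjoint T1 B := by
    rw [Finset.disjoint_left]
    intro p hp hp'
    rw [hT1, Finset.mem_image] at hp
    obtain ⟨k, hk, rfl⟩ := hp
    rw [hB, Finset.mem_biUnion] at hp'
    obtain ⟨n, hn, hp'⟩ := hp'
    rw [Finset.mem_biUnion] at hp'
    obtain ⟨u, hu, hp'⟩ := hp'
    rw [Finset.mem_Icc] at hn
    have hb := (Sset_bounds hn.1 hp').2.2.1
    have h1 := prp_natAbs γ k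
    have habs : |(prp γ k).1 - (prp γ k).2| = 1 := by
      rw [Int.abs_eq_natAbs, h1]
      rfl
    have h2n : (2:ℤ) ≤ 2^n := by
      calc (2:ℤ) = 2^1 := by ring
        _ ≤ 2^n := pow_le_pow_right₀ (by norm_num) hn.1
    omega
  have hinj : ∀ x ∈ γ, ∀ y ∈ γ, prp γ x = prp γ y → x = y := by
    intro x hx y hy h
    have h1 := prp_sum γ x
    have h2 := prp_sum γ y
    rw [h, h2] at h1
    omega
  have hsumT1 : (γ.card : ℝ≥0∞) * c ≤
      ∑ p ∈ T1, ENNReal.ofReal (J ((p.1 - p.2).natAbs)) := by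
    rw [hT1, Finset.sum_image hinj]
    calc (γ.card : ℝ≥0∞) * c = ∑ _k ∈ γ, c := by rw [Finset.sum_const, nsmul_eq_mul]
      _ ≤ ∑ k ∈ γ, ENNReal.ofReal (J (((prp γ k).1 - (prp γ k).2).natAbs)) := by
          apply Finset.sum_le_sum
          intro k _
          rw [prp_natAbs]
          exact ENNReal.ofReal_le_ofReal (min_le_left _ _)
  have hpd1 : (↑(Finset.Icc 1 (n0 γ)) : Set ℕ).PairwiseDisjoint
      (fun n => (isoCover M a n γ).biUnion (fun u => Sset γ n u)) := by
    intro n hn n' hn' hne'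
    simp only [Finset.coe_Icc, Set.mem_Icc] at hn hn'
    have key : ∀ {m m' : ℕ}, 1 ≤ m → 1 ≤ m' → m < m' →
        Disjoint ((isoCover M a m γ).biUnion (fun u => Sset γ m u))
          ((isoCover M a m' γ).biUnion (fun u => Sset γ m' u)) := by
      intro m m' h1 h1' hlt
      rw [Finset.disjoint_left]
      intro p hp hp'
      rw [Finset.mem_biUnion] at hp hp'
      obtain ⟨u, _, hp⟩ := hp
      obtain ⟨u', _, hp'⟩ := hp'
      exact Sset_scale_not h1 h1' hlt hp hp'
    rcases lt_or_gt_of_ne hne' with h | h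
    · exact key hn.1 hn'.1 h
    · exact (key hn'.1 hn.1 h).symm
  have hsumB : ∑ p ∈ B, ENNReal.ofReal (J ((p.1 - p.2).natAbs)) =
      ∑ n ∈ Finset.Icc 1 (n0 γ), ∑ u ∈ isoCover M a n γ,
        ∑ p ∈ Sset γ n u, ENNReal.ofReal (J ((p.1 - p.2).natAbs)) := by
    rw [hB, Finset.sum_biUnion hpd1]
    apply Finset.sum_congr rfl
    intro n hn
    rw [Finset.mem_Icc] at hn
    apply Finset.sum_biUnion
    intro u hu u' hu' hne'
    exact Sset_u_disjoint hM ha1 hn.1 hu hu' hne'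
  have hBge : (∑ n ∈ Finset.Icc 1 (n0 γ), ((isoCover M a n γ).card : ℝ≥0∞)) * c ≤
      ∑ p ∈ B, ENNReal.ofReal (J ((p.1 - p.2).natAbs)) := by
    rw [hsumB, Finset.sum_mul]
    apply Finset.sum_le_sum
    intro n hn
    rw [Finset.mem_Icc] at hn
    calc ((isoCover M a n γ).card : ℝ≥0∞) * c = ∑ _u ∈ isoCover M a n γ, c := by
          rw [Finset.sum_const, nsmul_eq_mul]
      _ ≤ _ := Finset.sum_le_sum fun u _ => le_trans (hDJle n hn.1) (sum_Sset J hJ0 hn.1 γ u)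
  have hTle := sum_le_double J γ (T1 ∪ B) (by
    intro p hp
    rcases Finset.mem_union.mp hp with h | h
    exacts [hmemT1 p h, hmemB p h])
  rw [Finset.sum_union hdisj] at hTle
  have hN : ((isoCoverSize M a γ : ℕ) : ℝ≥0∞) * c ≤
      ∑ x ∈ Iminus γ, ∑' y : ℤ,
        if y ∈ Iminus γ then 0 else ENNReal.ofReal (J ((x - y).natAbs)) := by
    refine le_trans ?_ hTle
    rw [isoCoverSize, Nat.cast_add, add_mul, Nat.cast_sum]
    exact add_le_add hsumT1 hBge
  have h2 : ENNReal.ofReal (2 * min (J 1) (DJ J)) = 2 * c := by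
    rw [hc, ENNReal.ofReal_mul (by norm_num : (0:ℝ) ≤ 2)]
    norm_num
  rw [energyE, h2]
  calc 2 * c * (isoCoverSize M a γ : ℝ≥0∞)
      = 2 * (((isoCoverSize M a γ : ℕ) : ℝ≥0∞) * c) := by ring
    _ ≤ _ := mul_le_mul_right hN 2
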